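/- arXiv:1409.4435 — 6 statements merged into one kernel-verified Lean document; each statement's English description precedes it below -/
import Mathlib

section
/- Let (a_k)_{k≥1} be a monotone null sequence of real numbers, and let (b_k)_{k≥1} be its center coefficients. Then for every complex number v with |v| = 1 the series C_v = ∑_{k=1}^∞ b_k v^k converges absolutely, and for every such v with v ≠ 1 the series S_v = ∑_{k=1}^∞ a_k v^k converges and satisfies S_v = C_v/(v − 1). -/
/-- For a monotone null sequence `(a_k)_{k≥1}` with center coefficients
`(b_k)`, the center series `C_v = ∑_{k≥1} b_k v^k` converges absolutely for
every `v` on the unit circle, and for `v ≠ 1` on the unit circle the series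
`S_v = ∑_{k≥1} a_k v^k` converges, with `S_v = C_v / (v - 1)`. -/
theorem stmt_4 (a b : ℕ → ℝ)
    (ha_pos : ∀ k, 1 ≤ k → 0 < a k)
    (ha_mono : ∀ k, 1 ≤ k → a (k + 1) ≤ a k)
    (ha_lim : Filter.Tendsto a Filter.atTop (nhds 0))
    (hb1 : b 1 = -a 1)
    (hbk : ∀ k, 2 ≤ k → b k = a (k - 1) - a k) :
    (∀ v : ℂ, ‖v‖ = 1 →
      Summable (fun k : ℕ => ‖(b (k + 1) : ℂ) * v ^ (k + 1)‖)) ∧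
    (∀ v : ℂ, ‖v‖ = 1 → v ≠ 1 →
      Filter.Tendsto
        (fun N : ℕ => ∑ k ∈ Finset.range N, (a (k + 1) : ℂ) * v ^ (k + 1))
        Filter.atTop
        (nhds ((∑' k : ℕ, (b (k + 1) : ℂ) * v ^ (k + 1)) / (v - 1)))) := by
  have hbabs : ∀ k, 1 ≤ k → |b (k + 1)| = a k - a (k + 1) := by
    intro k hk
    rw [hbk (k + 1) (by omega)]
    simp only [Nat.add_sub_cancel]
    exact abs_of_nonneg (sub_nonneg.2 (ha_mono k hk))
  have hsum_eq : ∀ N, 1 ≤ N →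
      ∑ k ∈ Finset.range N, |b (k + 1)| = 2 * a 1 - a N := by
    intro N hN
    induction N with
    | zero => omega
    | succ n ih =>
      rcases Nat.lt_or_ge 1 (n + 1) with h1 | h1
      · have hn : 1 ≤ n := by omega
        rw [Finset.sum_range_succ, ih hn, hbabs n hn]
        ring
      · have hn0 : n = 0 := by omega
        subst hn0
        rw [Finset.sum_range_one, hb1, abs_neg,
          abs_of_pos (ha_pos 1 le_rfl)]
        ring
  have habs_sum : Summable (fun k : ℕ => |b (k + 1)|) := by
    apply summable_of_sum_range_le (c := 2 * a 1) (fun k => abs_nonneg _)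
    intro N
    rcases Nat.eq_zero_or_pos N with h | h
    · simp [h]
      linarith [ha_pos 1 le_rfl]
    · rw [hsum_eq N h]
      linarith [ha_pos N h]
  refine ⟨?_, ?_⟩
  · intro v hv
    have : (fun k : ℕ => ‖(b (k + 1) : ℂ) * v ^ (k + 1)‖)
        = fun k : ℕ => |b (k + 1)| := by
      funext k
      rw [norm_mul, norm_pow, hv, one_pow, mul_one, Complex.norm_real,
        Real.norm_eq_abs]
    rw [this]
    exact habs_sum
  · intro v hv hv1
    have hC : Summable (fun k : ℕ => (b (k + 1) : ℂ) * v ^ (k + 1)) := by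
      apply Summable.of_norm
      have : (fun k : ℕ => ‖(b (k + 1) : ℂ) * v ^ (k + 1)‖)
          = fun k : ℕ => |b (k + 1)| := by
        funext k
        rw [norm_mul, norm_pow, hv, one_pow, mul_one, Complex.norm_real,
          Real.norm_eq_abs]
      rw [this]
      exact habs_sum
    have hkey : ∀ N, 1 ≤ N →
        (v - 1) * ∑ k ∈ Finset.range N, (a (k + 1) : ℂ) * v ^ (k + 1)
          = (∑ k ∈ Finset.range N, (b (k + 1) : ℂ) * v ^ (k + 1))
            + (a N : ℂ) * v ^ (N + 1) := by
      intro N hN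
      induction N with
      | zero => omega
      | succ n ih =>
        rcases Nat.lt_or_ge 1 (n + 1) with h1 | h1
        · have hn : 1 ≤ n := by omega
          have hb : b (n + 1) = a n - a (n + 1) := by
            rw [hbk (n + 1) (by omega), Nat.add_sub_cancel]
          rw [Finset.sum_range_succ, Finset.sum_range_succ, mul_add, ih hn, hb]
          push_cast
          ring
        · have hn0 : n = 0 := by omega
          subst hn0
          rw [Finset.sum_range_one, Finset.sum_range_one, hb1]
          push_cast
          ring
    have hvne : v - 1 ≠ 0 := sub_ne_zero.2 hv1
    have htail : Filter.Tendsto (fun N : ℕ => (a N : ℂ) * v ^ (N + 1))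
        Filter.atTop (nhds 0) := by
      rw [tendsto_zero_iff_norm_tendsto_zero]
      have : (fun N : ℕ => ‖(a N : ℂ) * v ^ (N + 1)‖) = fun N => |a N| := by
        funext N
        rw [norm_mul, norm_pow, hv, one_pow, mul_one, Complex.norm_real,
          Real.norm_eq_abs]
      rw [this]
      simpa using ha_lim.abs
    have hCN : Filter.Tendsto
        (fun N : ℕ => ∑ k ∈ Finset.range N, (b (k + 1) : ℂ) * v ^ (k + 1))
        Filter.atTop (nhds (∑' k : ℕ, (b (k + 1) : ℂ) * v ^ (k + 1))) :=
      hC.hasSum.tendsto_sum_nat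
    have hmain : Filter.Tendsto
        (fun N : ℕ => ((∑ k ∈ Finset.range N, (b (k + 1) : ℂ) * v ^ (k + 1))
          + (a N : ℂ) * v ^ (N + 1)) / (v - 1))
        Filter.atTop
        (nhds ((∑' k : ℕ, (b (k + 1) : ℂ) * v ^ (k + 1)) / (v - 1))) := by
      have := (hCN.add htail).div_const (v - 1)
      simpa using this
    apply hmain.congr'
    filter_upwards [Filter.eventually_ge_atTop 1] with N hN
    rw [div_eq_iff hvne, ← hkey N hN]; ring
end

section
/- For every complex number z with |z| < 1, the identity (z + 1) · ∑_{k=1}^∞ ((−1)^k / k) z^k = −z + ∑_{k=1}^∞ ((−1)^k / (k(k+1))) z^{k+1} holds, where the series on the right-hand side converges absolutely for all |z| ≤ 1. -/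
private lemma norm_shift1 (k : ℕ) : ‖((k : ℂ) + 1)‖ = (k : ℝ) + 1 := by
  rw [show ((k:ℂ) + 1) = ((k+1 : ℕ) : ℂ) by push_cast; ring, Complex.norm_natCast]
  push_cast; ring

private lemma norm_shift2 (k : ℕ) : ‖((k : ℂ) + 2)‖ = (k : ℝ) + 2 := by
  rw [show ((k:ℂ) + 2) = ((k+2 : ℕ) : ℂ) by push_cast; ring, Complex.norm_natCast]
  push_cast; ring

private lemma summable_f {z : ℂ} (hz : ‖z‖ < 1) :
    Summable (fun k : ℕ => ((-1 : ℂ) ^ (k + 1) / ((k : ℂ) + 1)) * z ^ (k + 1)) := by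
  apply Summable.of_norm
  have hmaj : Summable (fun k : ℕ => ‖z‖ ^ k * ‖z‖) :=
    (summable_geometric_of_lt_one (norm_nonneg z) hz).mul_right _
  refine Summable.of_nonneg_of_le (fun k => norm_nonneg _) ?_ hmaj
  · intro k
    simp only [norm_mul, norm_div, norm_pow, norm_neg, norm_one, one_pow, one_div,
      norm_shift1]
    rw [pow_succ]
    have h1 : ((k : ℝ) + 1)⁻¹ ≤ 1 := by
      rw [inv_le_one_iff₀]; right
      have : (0:ℝ) ≤ (k:ℝ) := Nat.cast_nonneg k
      linarith
    calc ((k : ℝ) + 1)⁻¹ * (‖z‖ ^ k * ‖z‖) ≤ 1 * (‖z‖ ^ k * ‖z‖) := by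
          apply mul_le_mul_of_nonneg_right h1; positivity
      _ = ‖z‖ ^ k * ‖z‖ := one_mul _

/-- Center series of the one-cycle sawtooth wave: for `|z| < 1`,
`(z + 1) · ∑_{k≥1} ((-1)^k / k) z^k = -z + ∑_{k≥1} ((-1)^k / (k(k+1))) z^{k+1}`,
where the right-hand series converges absolutely for all `|z| ≤ 1`. -/
theorem stmt_13 :
    (∀ z : ℂ, ‖z‖ < 1 →
      (z + 1) * ∑' k : ℕ, ((-1 : ℂ) ^ (k + 1) / ((k : ℂ) + 1)) * z ^ (k + 1) =
        -z + ∑' k : ℕ,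
          ((-1 : ℂ) ^ (k + 1) / (((k : ℂ) + 1) * ((k : ℂ) + 2))) * z ^ (k + 2)) ∧
    (∀ z : ℂ, ‖z‖ ≤ 1 →
      Summable (fun k : ℕ =>
        ‖((-1 : ℂ) ^ (k + 1) / (((k : ℂ) + 1) * ((k : ℂ) + 2))) * z ^ (k + 2)‖)) := by
  constructor
  · intro z hz
    set f : ℕ → ℂ := fun k => ((-1 : ℂ) ^ (k + 1) / ((k : ℂ) + 1)) * z ^ (k + 1) with hf_def
    have hf : Summable f := summable_f hz
    have hg : Summable (fun k => z * f k) := hf.mul_left z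
    have hfs : Summable (fun k => f (k + 1)) := (summable_nat_add_iff 1).mpr hf
    have key : ∀ k : ℕ,
        ((-1 : ℂ) ^ (k + 1) / (((k : ℂ) + 1) * ((k : ℂ) + 2))) * z ^ (k + 2)
          = z * f k + f (k + 1) := by
      intro k
      have h1 : ((k : ℂ) + 1) ≠ 0 := by
        intro h
        have := Nat.cast_add_one_ne_zero (R := ℂ) k
        exact this (by push_cast; linear_combination h)
      have h2 : ((k : ℂ) + 2) ≠ 0 := by
        intro h
        have := Nat.cast_add_one_ne_zero (R := ℂ) (k + 1)
        exact this (by push_cast; linear_combination h)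
      have h3 : ((k : ℂ) + 1 + 1) ≠ 0 := by
        intro h; exact h2 (by linear_combination h)
      simp only [hf_def]
      push_cast
      field_simp
      ring
    have : (∑' k : ℕ,
        ((-1 : ℂ) ^ (k + 1) / (((k : ℂ) + 1) * ((k : ℂ) + 2))) * z ^ (k + 2))
        = z * (∑' k, f k) + (∑' k, f (k + 1)) := by
      rw [← tsum_mul_left, ← Summable.tsum_add hg hfs]
      exact tsum_congr key
    rw [this]
    have hshift : (∑' k, f (k + 1)) = (∑' k, f k) - f 0 := by
      have := Summable.tsum_eq_zero_add hf
      rw [this]; ring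
    have hf0 : f 0 = -z := by simp [hf_def]
    rw [hshift, hf0]
    ring
  · intro z hz
    have hmaj : Summable (fun k : ℕ => (((k : ℝ) + 1) ^ 2)⁻¹) := by
      have h0 : Summable (fun n : ℕ => ((n : ℝ) ^ 2)⁻¹) := by
        have := Real.summable_one_div_nat_pow.mpr (by norm_num : 1 < 2)
        simpa [one_div] using this
      have := (summable_nat_add_iff 1).mpr h0
      simpa using this
    refine Summable.of_nonneg_of_le (fun k => norm_nonneg _) ?_ hmaj
    · intro k
      simp only [norm_mul, norm_div, norm_pow, norm_neg, norm_one, one_pow, one_div,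
        norm_shift1, norm_shift2]
      have hzp : ‖z‖ ^ (k + 2) ≤ 1 := pow_le_one₀ (norm_nonneg z) hz
      have hk : (0:ℝ) ≤ (k:ℝ) := Nat.cast_nonneg k
      calc (((k : ℝ) + 1) * ((k : ℝ) + 2))⁻¹ * ‖z‖ ^ (k + 2)
          ≤ (((k : ℝ) + 1) * ((k : ℝ) + 2))⁻¹ * 1 := by
            apply mul_le_mul_of_nonneg_left hzp; positivity
        _ = (((k : ℝ) + 1) * ((k : ℝ) + 2))⁻¹ := mul_one _
        _ ≤ (((k : ℝ) + 1) ^ 2)⁻¹ := by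
            apply inv_anti₀ (by positivity)
            nlinarith
end

section
/- For every complex number z with |z| < 1, the identity (z² − 1) · ∑_{j=1}^∞ z^{2j}/(2j) = −z²/2 + (1/2) ∑_{j=1}^∞ z^{2j+2}/(j(j+1)) holds, where the series on the right-hand side converges absolutely for all |z| ≤ 1. -/
lemma aux_summable (z : ℂ) (hz : ‖z‖ < 1) (c : ℕ → ℂ) (hc : ∀ j, 1 ≤ ‖c j‖)
    (e : ℕ → ℕ) (he : ∀ j, j ≤ e j) :
    Summable (fun j : ℕ => z ^ (e j) / c j) := by
  apply Summable.of_norm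
  apply Summable.of_nonneg_of_le (fun j => norm_nonneg _) _
    (summable_geometric_of_lt_one (norm_nonneg z) hz)
  intro j
  rw [norm_div, norm_pow]
  calc ‖z‖ ^ (e j) / ‖c j‖ ≤ ‖z‖ ^ (e j) := div_le_self (pow_nonneg (norm_nonneg z) _) (hc j)
    _ ≤ ‖z‖ ^ j := pow_le_pow_of_le_one (norm_nonneg z) hz.le (he j)

set_option maxHeartbeats 1000000 in
/-- Center series of the two-cycle sawtooth wave: for `|z| < 1`,
`(z² - 1) · ∑_{j≥1} z^{2j}/(2j) = -z²/2 + (1/2) ∑_{j≥1} z^{2j+2}/(j(j+1))`,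
where the right-hand series converges absolutely for all `|z| ≤ 1`. -/
theorem stmt_15 :
    (∀ z : ℂ, ‖z‖ < 1 →
      (z ^ 2 - 1) * ∑' j : ℕ, z ^ (2 * (j + 1)) / (2 * ((j : ℂ) + 1)) =
        -z ^ 2 / 2 + (1 / 2) * ∑' j : ℕ,
          z ^ (2 * (j + 1) + 2) / (((j : ℂ) + 1) * ((j : ℂ) + 2))) ∧
    (∀ z : ℂ, ‖z‖ ≤ 1 →
      Summable (fun j : ℕ =>
        ‖z ^ (2 * (j + 1) + 2) / (((j : ℂ) + 1) * ((j : ℂ) + 2))‖)) := by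
  constructor
  · intro z hz
    have hj1 : ∀ j : ℕ, ((j : ℂ) + 1) ≠ 0 := fun j => Nat.cast_add_one_ne_zero j
    have hj2 : ∀ j : ℕ, ((j : ℂ) + 2) ≠ 0 := by
      intro j
      have h : ((j : ℂ) + 2) = ((j + 1 : ℕ) : ℂ) + 1 := by push_cast; ring
      rw [h]; exact Nat.cast_add_one_ne_zero _
    have hnc1 : ∀ j : ℕ, (1 : ℝ) ≤ ‖2 * ((j : ℂ) + 1)‖ := by
      intro j
      have h : (2 * ((j : ℂ) + 1)) = ((2 * (j + 1) : ℕ) : ℂ) := by push_cast; ring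
      rw [h, Complex.norm_natCast]
      exact_mod_cast Nat.one_le_iff_ne_zero.mpr (by positivity)
    have hnc2 : ∀ j : ℕ, (1 : ℝ) ≤ ‖2 * ((j : ℂ) + 2)‖ := by
      intro j
      have h : (2 * ((j : ℂ) + 2)) = ((2 * (j + 2) : ℕ) : ℂ) := by push_cast; ring
      rw [h, Complex.norm_natCast]
      exact_mod_cast Nat.one_le_iff_ne_zero.mpr (by positivity)
    have hS : Summable (fun j : ℕ => z ^ (2 * (j + 1)) / (2 * ((j : ℂ) + 1))) :=
      aux_summable z hz _ hnc1 _ (fun j => by omega)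
    have hA : Summable (fun j : ℕ => z ^ (2 * (j + 1) + 2) / (2 * ((j : ℂ) + 1))) :=
      aux_summable z hz _ hnc1 _ (fun j => by omega)
    have hB : Summable (fun j : ℕ => z ^ (2 * (j + 1) + 2) / (2 * ((j : ℂ) + 2))) :=
      aux_summable z hz _ hnc2 _ (fun j => by omega)
    have key : z ^ 2 * ∑' j : ℕ, z ^ (2 * (j + 1)) / (2 * ((j : ℂ) + 1)) =
        ∑' j : ℕ, z ^ (2 * (j + 1) + 2) / (2 * ((j : ℂ) + 1)) := by
      rw [← tsum_mul_left]
      apply tsum_congr; intro j; ring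
    have shift : ∑' j : ℕ, z ^ (2 * (j + 1)) / (2 * ((j : ℂ) + 1)) =
        z ^ 2 / 2 + ∑' j : ℕ, z ^ (2 * (j + 1) + 2) / (2 * ((j : ℂ) + 2)) := by
      rw [Summable.tsum_eq_zero_add hS]
      congr 1
      · norm_num
      · apply tsum_congr; intro j
        have : ((j + 1 : ℕ) : ℂ) = (j : ℂ) + 1 := by push_cast; ring
        rw [this]
        ring_nf
    have expand : (z ^ 2 - 1) * ∑' j : ℕ, z ^ (2 * (j + 1)) / (2 * ((j : ℂ) + 1)) =
        z ^ 2 * (∑' j : ℕ, z ^ (2 * (j + 1)) / (2 * ((j : ℂ) + 1))) -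
        ∑' j : ℕ, z ^ (2 * (j + 1)) / (2 * ((j : ℂ) + 1)) := by ring
    rw [expand, key]
    nth_rewrite 1 [shift]
    have rhs : (1 / 2 : ℂ) * ∑' j : ℕ,
        z ^ (2 * (j + 1) + 2) / (((j : ℂ) + 1) * ((j : ℂ) + 2)) =
        ∑' j : ℕ, (z ^ (2 * (j + 1) + 2) / (2 * ((j : ℂ) + 1)) -
          z ^ (2 * (j + 1) + 2) / (2 * ((j : ℂ) + 2))) := by
      rw [← tsum_mul_left]
      apply tsum_congr; intro j
      field_simp [hj1 j, hj2 j]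
      ring
    rw [rhs, Summable.tsum_sub hA hB]
    ring
  · intro z hz
    have hgsum : Summable (fun j : ℕ => 1 / (((j : ℝ) + 1) ^ 2)) := by
      have := Real.summable_one_div_nat_pow.mpr (show 1 < 2 by norm_num)
      have h := (summable_nat_add_iff 1).mpr this
      apply h.congr
      intro j
      push_cast
      ring
    refine Summable.of_nonneg_of_le (fun j => norm_nonneg _) (fun j => ?_) hgsum
    · 
      have h1 : ((j : ℂ) + 1) * ((j : ℂ) + 2) = (((j + 1) * (j + 2) : ℕ) : ℂ) := by
        push_cast; ring
      rw [norm_div, norm_pow, h1, Complex.norm_natCast]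
      have hb : (0 : ℝ) < ((j + 1) * (j + 2) : ℕ) := by positivity
      have h2 : ‖z‖ ^ (2 * (j + 1) + 2) ≤ 1 := pow_le_one₀ (norm_nonneg z) hz
      exact div_le_div₀ zero_le_one h2 (by positivity)
        (by push_cast; nlinarith [Nat.cast_nonneg (α := ℝ) j])
end

section
/- For every complex number z with |z| < 1, the identity (z² − 1) · ∑_{j=0}^∞ z^{2j+1}/(2j+1)² = −z + ∑_{j=1}^∞ (8j/(4j² − 1)²) z^{2j+1} holds, where the series on the right-hand side converges absolutely for all |z| ≤ 1. -/
private lemma aux_summable_s16 (z : ℂ) (hz : ‖z‖ < 1) (f : ℕ → ℂ)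
    (hf : ∀ j, ‖f j‖ ≤ ‖z‖ ^ j) : Summable f :=
  Summable.of_norm (Summable.of_nonneg_of_le (fun _ => norm_nonneg _) hf
    (summable_geometric_of_lt_one (norm_nonneg z) hz))

private lemma aux_norm_odd (j : ℕ) : (1:ℝ) ≤ ‖2 * (j : ℂ) + 1‖ := by
  have h : (2 * (j : ℂ) + 1) = ((2 * j + 1 : ℕ) : ℂ) := by push_cast; ring
  rw [h, Complex.norm_natCast]
  exact_mod_cast Nat.one_le_iff_ne_zero.mpr (by omega)

/-- Center series of the triangular wave: for `|z| < 1`,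
`(z² - 1) · ∑_{j≥0} z^{2j+1}/(2j+1)² = -z + ∑_{j≥1} (8j/(4j² - 1)²) z^{2j+1}`,
where the right-hand series converges absolutely for all `|z| ≤ 1`. -/
theorem stmt_16 :
    (∀ z : ℂ, ‖z‖ < 1 →
      (z ^ 2 - 1) * ∑' j : ℕ, z ^ (2 * j + 1) / (2 * (j : ℂ) + 1) ^ 2 =
        -z + ∑' j : ℕ,
          (8 * ((j : ℂ) + 1) / (4 * ((j : ℂ) + 1) ^ 2 - 1) ^ 2) * z ^ (2 * (j + 1) + 1)) ∧
    (∀ z : ℂ, ‖z‖ ≤ 1 →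
      Summable (fun j : ℕ =>
        ‖(8 * ((j : ℂ) + 1) / (4 * ((j : ℂ) + 1) ^ 2 - 1) ^ 2) * z ^ (2 * (j + 1) + 1)‖)) := by
  constructor
  · intro z hz
    set f : ℕ → ℂ := fun j => z ^ (2 * j + 1) / (2 * (j : ℂ) + 1) ^ 2 with hfdef
    have hbound : ∀ j, ‖f j‖ ≤ ‖z‖ ^ j := by
      intro j
      rw [hfdef]
      simp only
      rw [norm_div, norm_pow, norm_pow]
      have h := aux_norm_odd j
      have h2 : (1:ℝ) ≤ ‖2 * (j : ℂ) + 1‖ ^ 2 := by nlinarith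
      calc ‖z‖ ^ (2 * j + 1) / ‖2 * (j : ℂ) + 1‖ ^ 2
          ≤ ‖z‖ ^ (2 * j + 1) := div_le_self (pow_nonneg (norm_nonneg z) _) h2
        _ ≤ ‖z‖ ^ j := pow_le_pow_of_le_one (norm_nonneg z) hz.le (by omega)
    have hs : Summable f := aux_summable_s16 z hz f hbound
    have hs2 : Summable (fun j => z ^ 2 * f j) := hs.mul_left _
    have hs3 : Summable (fun j => f (j + 1)) := (summable_nat_add_iff 1).mpr hs
    have hS : ∑' j, f j = f 0 + ∑' j, f (j + 1) := Summable.tsum_eq_zero_add hs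
    have hf0 : f 0 = z := by simp [hfdef]
    have key : ∀ j : ℕ, z ^ 2 * f j - f (j + 1) =
        (8 * ((j : ℂ) + 1) / (4 * ((j : ℂ) + 1) ^ 2 - 1) ^ 2) * z ^ (2 * (j + 1) + 1) := by
      intro j
      have h1 : (2 * (j : ℂ) + 1) ≠ 0 := by
        have h : (2 * (j : ℂ) + 1) = ((2 * j + 1 : ℕ) : ℂ) := by push_cast; ring
        rw [h]; exact Nat.cast_ne_zero.mpr (by omega)
      have h2 : (2 * ((j : ℂ) + 1) + 1) ≠ 0 := by
        have h : (2 * ((j : ℂ) + 1) + 1) = ((2 * j + 3 : ℕ) : ℂ) := by push_cast; ring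
        rw [h]; exact Nat.cast_ne_zero.mpr (by omega)
      have h3 : (4 * ((j : ℂ) + 1) ^ 2 - 1) ≠ 0 := by
        have h : (4 * ((j : ℂ) + 1) ^ 2 - 1) = (2 * (j : ℂ) + 1) * (2 * ((j : ℂ) + 1) + 1) := by
          ring
        rw [h]; exact mul_ne_zero h1 h2
      simp only [hfdef, Nat.cast_add, Nat.cast_one]
      rw [show (4 * ((j : ℂ) + 1) ^ 2 - 1) = (2 * (j : ℂ) + 1) * (2 * ((j : ℂ) + 1) + 1) by ring]
      field_simp
      ring
    calc (z ^ 2 - 1) * ∑' j, f j = z ^ 2 * ∑' j, f j - ∑' j, f j := by ring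
      _ = (∑' j, z ^ 2 * f j) - (f 0 + ∑' j, f (j + 1)) := by rw [tsum_mul_left, hS]
      _ = -z + ((∑' j, z ^ 2 * f j) - ∑' j, f (j + 1)) := by rw [hf0]; ring
      _ = -z + ∑' j, (z ^ 2 * f j - f (j + 1)) := by rw [Summable.tsum_sub hs2 hs3]
      _ = -z + ∑' j : ℕ,
          (8 * ((j : ℂ) + 1) / (4 * ((j : ℂ) + 1) ^ 2 - 1) ^ 2) * z ^ (2 * (j + 1) + 1) := by
        rw [tsum_congr key]
  · intro z hz
    have hg : Summable (fun j : ℕ => 8 / ((j : ℝ) + 1) ^ 2) := by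
      have h := Real.summable_one_div_nat_pow.mpr (by norm_num : 1 < 2)
      have h2 := (summable_nat_add_iff 1).mpr h
      have h3 := h2.mul_left 8
      refine h3.congr fun j => ?_
      push_cast
      ring
    refine Summable.of_nonneg_of_le (fun _ => norm_nonneg _) (fun j => ?_) hg
    have hcast : (8 * ((j : ℂ) + 1) / (4 * ((j : ℂ) + 1) ^ 2 - 1) ^ 2) =
        ((8 * ((j : ℝ) + 1) / (4 * ((j : ℝ) + 1) ^ 2 - 1) ^ 2 : ℝ) : ℂ) := by
      push_cast; ring
    have hn : (1:ℝ) ≤ (j : ℝ) + 1 := by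
      have : (0:ℝ) ≤ (j : ℝ) := Nat.cast_nonneg j
      linarith
    have hn2 : (1:ℝ) ≤ ((j : ℝ) + 1) ^ 2 := by nlinarith
    have hd0 : (0:ℝ) < 4 * ((j : ℝ) + 1) ^ 2 - 1 := by linarith
    have hden : (0:ℝ) < (4 * ((j : ℝ) + 1) ^ 2 - 1) ^ 2 := pow_pos hd0 2
    have hnum : (0:ℝ) ≤ 8 * ((j : ℝ) + 1) := by positivity
    rw [norm_mul, hcast, Complex.norm_real, norm_pow]
    have h1 : |8 * ((j : ℝ) + 1) / (4 * ((j : ℝ) + 1) ^ 2 - 1) ^ 2| =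
        8 * ((j : ℝ) + 1) / (4 * ((j : ℝ) + 1) ^ 2 - 1) ^ 2 :=
      abs_of_nonneg (div_nonneg hnum hden.le)
    rw [Real.norm_eq_abs, h1]
    calc 8 * ((j : ℝ) + 1) / (4 * ((j : ℝ) + 1) ^ 2 - 1) ^ 2 * ‖z‖ ^ (2 * (j + 1) + 1)
        ≤ 8 * ((j : ℝ) + 1) / (4 * ((j : ℝ) + 1) ^ 2 - 1) ^ 2 * 1 := by
          apply mul_le_mul_of_nonneg_left _ (div_nonneg hnum hden.le)
          exact pow_le_one₀ (norm_nonneg z) hz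
      _ = 8 * ((j : ℝ) + 1) / (4 * ((j : ℝ) + 1) ^ 2 - 1) ^ 2 := mul_one _
      _ ≤ 8 / ((j : ℝ) + 1) ^ 2 := by
          rw [div_le_div_iff₀ hden (by positivity)]
          nlinarith [sq_nonneg ((j:ℝ)+1), sq_nonneg (((j:ℝ)+1)^2 - 1)]
end

section
/- For every complex number z with |z| < 1, the identity (z² + 1) · ∑_{j=0}^∞ ((−1)^j/(2j+1)) z^{2j+1} = z − ∑_{j=1}^∞ (2(−1)^j/(4j² − 1)) z^{2j+1} holds, where the series on the right-hand side converges absolutely for all |z| ≤ 1. -/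
private lemma aux_ne1 (j : ℕ) : (2 * (j:ℂ) + 1) ≠ 0 := by
  have h : (2 * (j:ℂ) + 1) = ((2*j+1 : ℕ) : ℂ) := by push_cast; ring
  rw [h]
  exact Nat.cast_ne_zero.mpr (by omega)

private lemma aux_ne3 (j : ℕ) : (2 * (j:ℂ) + 3) ≠ 0 := by
  have h : (2 * (j:ℂ) + 3) = ((2*j+3 : ℕ) : ℂ) := by push_cast; ring
  rw [h]
  exact Nat.cast_ne_zero.mpr (by omega)

private lemma aux_norm_coeff (j : ℕ) :
    ‖(2 * (-1 : ℂ) ^ (j + 1) / (4 * ((j : ℂ) + 1) ^ 2 - 1))‖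
      = 2 / ((2*(j:ℝ)+1) * (2*(j:ℝ)+3)) := by
  have hd : 4 * ((j : ℂ) + 1) ^ 2 - 1 = (2*(j:ℂ)+1) * (2*(j:ℂ)+3) := by ring
  rw [hd, norm_div, norm_mul, norm_mul, norm_pow, norm_neg, norm_one, one_pow, mul_one]
  have h1 : ‖(2*(j:ℂ)+1)‖ = 2*(j:ℝ)+1 := by
    rw [show (2*(j:ℂ)+1) = ((2*j+1 : ℕ) : ℂ) from by push_cast; ring,
      Complex.norm_natCast]
    push_cast; ring
  have h3 : ‖(2*(j:ℂ)+3)‖ = 2*(j:ℝ)+3 := by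
    rw [show (2*(j:ℂ)+3) = ((2*j+3 : ℕ) : ℂ) from by push_cast; ring,
      Complex.norm_natCast]
    push_cast; ring
  rw [h1, h3, Complex.norm_ofNat]

/-- Center series of the shifted (even) square wave: for `|z| < 1`,
`(z² + 1) · ∑_{j≥0} ((-1)^j/(2j+1)) z^{2j+1} = z - ∑_{j≥1} (2(-1)^j/(4j² - 1)) z^{2j+1}`,
where the right-hand series converges absolutely for all `|z| ≤ 1`. -/
theorem stmt_17 :
    (∀ z : ℂ, ‖z‖ < 1 →
      (z ^ 2 + 1) * ∑' j : ℕ, ((-1 : ℂ) ^ j / (2 * (j : ℂ) + 1)) * z ^ (2 * j + 1) =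
        z - ∑' j : ℕ,
          (2 * (-1 : ℂ) ^ (j + 1) / (4 * ((j : ℂ) + 1) ^ 2 - 1)) * z ^ (2 * (j + 1) + 1)) ∧
    (∀ z : ℂ, ‖z‖ ≤ 1 →
      Summable (fun j : ℕ =>
        ‖(2 * (-1 : ℂ) ^ (j + 1) / (4 * ((j : ℂ) + 1) ^ 2 - 1)) * z ^ (2 * (j + 1) + 1)‖)) := by
  have hsumnorm : ∀ z : ℂ, ‖z‖ ≤ 1 →
      Summable (fun j : ℕ =>
        ‖(2 * (-1 : ℂ) ^ (j + 1) / (4 * ((j : ℂ) + 1) ^ 2 - 1)) * z ^ (2 * (j + 1) + 1)‖) := by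
    intro z hz
    have hbase : Summable (fun n : ℕ => (1:ℝ) / (n:ℝ) ^ 2) :=
      Real.summable_one_div_nat_pow.mpr one_lt_two
    have hshift : Summable (fun j : ℕ => (1:ℝ) / ((j:ℝ)+1) ^ 2) := by
      have := (summable_nat_add_iff 1).mpr hbase
      exact this.congr (fun j => by push_cast; ring_nf)
    apply Summable.of_nonneg_of_le (fun j => norm_nonneg _) _ hshift
    intro j
    rw [norm_mul, aux_norm_coeff, norm_pow]
    have hzp : ‖z‖ ^ (2*(j+1)+1) ≤ 1 := pow_le_one₀ (norm_nonneg z) hz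
    have hj : (0:ℝ) ≤ (j:ℝ) := Nat.cast_nonneg j
    calc 2 / ((2*(j:ℝ)+1) * (2*(j:ℝ)+3)) * ‖z‖ ^ (2*(j+1)+1)
        ≤ 2 / ((2*(j:ℝ)+1) * (2*(j:ℝ)+3)) * 1 := by
          apply mul_le_mul_of_nonneg_left hzp (by positivity)
      _ ≤ 1 / ((j:ℝ)+1) ^ 2 := by
          rw [mul_one, div_le_div_iff₀ (by positivity) (by positivity)]
          nlinarith
  refine ⟨?_, hsumnorm⟩
  intro z hz
  set f : ℕ → ℂ := fun j => ((-1 : ℂ) ^ j / (2 * (j : ℂ) + 1)) * z ^ (2 * j + 1) with hf_def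
  have hz2 : ‖z‖ ^ 2 < 1 := by nlinarith [norm_nonneg z]
  have hgeo : Summable (fun j : ℕ => ‖z‖ ^ (2*j+1)) := by
    have h := (summable_geometric_of_lt_one (by positivity) hz2).mul_left ‖z‖
    exact h.congr (fun j => by rw [pow_add, pow_mul, pow_one, mul_comm])
  have hf : Summable f := by
    apply Summable.of_norm_bounded hgeo
    intro j
    rw [hf_def]
    simp only [norm_mul, norm_div, norm_pow, norm_neg, norm_one, one_pow]
    have h1 : ‖(2*(j:ℂ)+1)‖ = 2*(j:ℝ)+1 := by
      rw [show (2*(j:ℂ)+1) = ((2*j+1 : ℕ) : ℂ) from by push_cast; ring,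
        Complex.norm_natCast]
      push_cast; ring
    rw [h1]
    have : 1 / (2*(j:ℝ)+1) ≤ 1 := by
      rw [div_le_one (by positivity)]; nlinarith [Nat.cast_nonneg (α := ℝ) j]
    calc 1 / (2*(j:ℝ)+1) * ‖z‖ ^ (2*j+1) ≤ 1 * ‖z‖ ^ (2*j+1) :=
          mul_le_mul_of_nonneg_right this (by positivity)
      _ = ‖z‖ ^ (2*j+1) := one_mul _
  -- auxiliary series
  have hA : Summable (fun j : ℕ => ((-1 : ℂ) ^ j / (2 * (j : ℂ) + 1)) * z ^ (2*j+3)) := by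
    have h := hf.mul_left (z^2)
    exact h.congr (fun j => by rw [hf_def]; ring)
  have hB : Summable (fun j : ℕ => f (j+1)) := (summable_nat_add_iff 1).mpr hf
  have hB' : Summable (fun j : ℕ =>
      ((-1 : ℂ) ^ (j+1) / (2 * ((j:ℂ)+1) + 1)) * z ^ (2*j+3)) := by
    apply hB.congr
    intro j
    simp only [hf_def]
    rw [show 2*(j+1)+1 = 2*j+3 from by ring]
    push_cast
    ring
  -- key pointwise identity for the RHS series
  have hkey : ∀ j : ℕ,
      (2 * (-1 : ℂ) ^ (j + 1) / (4 * ((j : ℂ) + 1) ^ 2 - 1)) * z ^ (2 * (j + 1) + 1)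
      = -( ((-1 : ℂ) ^ j / (2 * (j : ℂ) + 1)) * z ^ (2*j+3)
          + ((-1 : ℂ) ^ (j+1) / (2 * ((j:ℂ)+1) + 1)) * z ^ (2*j+3) ) := by
    intro j
    rw [show 2*(j+1)+1 = 2*j+3 from by ring]
    have h1 := aux_ne1 j
    have h3 : (2 * ((j:ℂ)+1) + 1) ≠ 0 := by
      have := aux_ne3 j; intro h; apply this; rw [← h]; ring
    have hd : 4 * ((j : ℂ) + 1) ^ 2 - 1 = (2*(j:ℂ)+1) * (2*((j:ℂ)+1)+1) := by ring
    rw [hd, pow_succ]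
    field_simp
    ring
  -- rewrite the RHS tsum
  have hRHS : ∑' j : ℕ,
      (2 * (-1 : ℂ) ^ (j + 1) / (4 * ((j : ℂ) + 1) ^ 2 - 1)) * z ^ (2 * (j + 1) + 1)
      = -( (∑' j : ℕ, ((-1 : ℂ) ^ j / (2 * (j : ℂ) + 1)) * z ^ (2*j+3))
          + ∑' j : ℕ, ((-1 : ℂ) ^ (j+1) / (2 * ((j:ℂ)+1) + 1)) * z ^ (2*j+3) ) := by
    rw [← Summable.tsum_add hA hB', ← tsum_neg]
    exact tsum_congr hkey
  -- decompose ∑' f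
  have hsplit : ∑' j : ℕ, f j
      = z + ∑' j : ℕ, ((-1 : ℂ) ^ (j+1) / (2 * ((j:ℂ)+1) + 1)) * z ^ (2*j+3) := by
    rw [Summable.tsum_eq_zero_add hf]
    congr 1
    · simp [hf_def]
    · apply tsum_congr
      intro j
      simp only [hf_def]
      rw [show 2*(j+1)+1 = 2*j+3 from by ring]
      push_cast
      ring
  have hmul : z^2 * ∑' j : ℕ, f j
      = ∑' j : ℕ, ((-1 : ℂ) ^ j / (2 * (j : ℂ) + 1)) * z ^ (2*j+3) := by
    rw [← tsum_mul_left]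
    exact tsum_congr (fun j => by rw [hf_def]; ring)
  calc (z ^ 2 + 1) * ∑' j : ℕ, f j = z^2 * (∑' j : ℕ, f j) + ∑' j : ℕ, f j := by ring
    _ = (∑' j : ℕ, ((-1 : ℂ) ^ j / (2 * (j : ℂ) + 1)) * z ^ (2*j+3))
        + (z + ∑' j : ℕ, ((-1 : ℂ) ^ (j+1) / (2 * ((j:ℂ)+1) + 1)) * z ^ (2*j+3)) := by
          rw [hmul, hsplit]
    _ = z - ∑' j : ℕ,
          (2 * (-1 : ℂ) ^ (j + 1) / (4 * ((j : ℂ) + 1) ^ 2 - 1)) * z ^ (2 * (j + 1) + 1) := by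
          rw [hRHS]; ring
end

section
/- For every real θ with −π < θ < π, the series ∑_{k=1}^∞ ((−1)^k/(k(k+1))) sin((2k+1)θ/2) converges absolutely and its sum equals sin(θ/2) − θ·cos(θ/2). -/
open Complex Filter Topology

lemma aux_inner (w : ℂ) (hw : ‖w‖ < 1) :
    HasSum (fun k : ℕ => (-1) ^ (k + 1) / (((k : ℂ) + 1) * ((k : ℂ) + 2)) * w ^ (k + 2))
      (w - (1 + w) * Complex.log (1 + w)) := by
  have h0 : ‖-w‖ < 1 := by simpa using hw
  have H : HasSum (fun n : ℕ => (-w) ^ n / (n : ℂ)) (-Complex.log (1 + w)) := by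
    simpa [sub_neg_eq_add] using hasSum_taylorSeries_neg_log h0
  have H1 : HasSum (fun k : ℕ => (-w) ^ (k + 1) / ((k : ℂ) + 1)) (-Complex.log (1 + w)) := by
    have := (hasSum_nat_add_iff (f := fun n : ℕ => (-w) ^ n / (n : ℂ)) 1).2 (by simpa using H)
    simpa [Nat.cast_add] using this
  have hs : (-Complex.log (1 + w) + w) + ∑ i ∈ Finset.range 2, (-w) ^ i / (i : ℂ)
      = -Complex.log (1 + w) := by
    simp [Finset.sum_range_succ]
  have H2 : HasSum (fun k : ℕ => (-w) ^ (k + 2) / ((k : ℂ) + 2))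
      (-Complex.log (1 + w) + w) := by
    have := (hasSum_nat_add_iff (f := fun n : ℕ => (-w) ^ n / (n : ℂ)) 2).2 (by rw [hs]; exact H)
    simpa [Nat.cast_add] using this
  have comb := (H1.mul_left w).add H2
  have hv : (w * -Complex.log (1 + w) + (-Complex.log (1 + w) + w))
      = w - (1 + w) * Complex.log (1 + w) := by ring
  rw [hv] at comb
  refine comb.congr_fun fun k => ?_
  have hk1 : ((k : ℂ) + 1) ≠ 0 := by
    have := Nat.cast_ne_zero (R := ℂ).2 (Nat.succ_ne_zero k)
    push_cast at this; exact this
  have hk2 : ((k : ℂ) + 2) ≠ 0 := by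
    have := Nat.cast_ne_zero (R := ℂ).2 (Nat.succ_ne_zero (k + 1))
    push_cast at this
    intro hc; exact this (by linear_combination hc)
  rw [neg_pow, neg_pow]
  field_simp
  ring


lemma aux_summable_s19 : Summable (fun k : ℕ => (1 : ℝ) / (((k : ℝ) + 1) * ((k : ℝ) + 2))) := by
  have h2 : Summable (fun k : ℕ => (1 : ℝ) / ((k : ℝ) + 1) ^ 2) := by
    have := (summable_nat_add_iff (f := fun n : ℕ => (1 : ℝ) / (n : ℝ) ^ 2) 1).2
      (Real.summable_one_div_nat_pow.2 one_lt_two)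
    simpa [Nat.cast_add] using this
  refine h2.of_nonneg_of_le (fun k => by positivity) fun k => ?_
  apply one_div_le_one_div_of_le (by positivity)
  have : (0:ℝ) ≤ (k:ℝ) := Nat.cast_nonneg k
  nlinarith

lemma aux_norm (k : ℕ) : ‖(-1 : ℂ) ^ (k + 1) / (((k : ℂ) + 1) * ((k : ℂ) + 2))‖
    = 1 / (((k : ℝ) + 1) * ((k : ℝ) + 2)) := by
  have h : (((k : ℂ) + 1) * ((k : ℂ) + 2)) = (((k + 1) * (k + 2) : ℕ) : ℂ) := by
    push_cast; ring
  rw [norm_div, norm_pow, norm_neg, norm_one, one_pow, h, Complex.norm_natCast]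
  push_cast; ring

lemma aux_boundary (θ : ℝ) (h₁ : -Real.pi < θ) (h₂ : θ < Real.pi) :
    HasSum (fun k : ℕ => (-1) ^ (k + 1) / (((k : ℂ) + 1) * ((k : ℂ) + 2))
        * Complex.exp (θ * I) ^ (k + 2))
      (Complex.exp (θ * I) - (1 + Complex.exp (θ * I)) * Complex.log (1 + Complex.exp (θ * I))) := by
  set w₀ : ℂ := Complex.exp (θ * I) with hw₀
  have hw₀n : ‖w₀‖ = 1 := by simp [hw₀]
  have hnorms : ∀ k : ℕ, ‖(-1 : ℂ) ^ (k + 1) / (((k : ℂ) + 1) * ((k : ℂ) + 2)) * w₀ ^ (k + 2)‖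
      = 1 / (((k : ℝ) + 1) * ((k : ℝ) + 2)) := fun k => by
    rw [norm_mul, norm_pow, hw₀n, one_pow, mul_one, aux_norm]
  have hsumm : Summable (fun k : ℕ => (-1 : ℂ) ^ (k + 1) / (((k : ℂ) + 1) * ((k : ℂ) + 2))
      * w₀ ^ (k + 2)) :=
    Summable.of_norm (aux_summable_s19.congr fun k => (hnorms k).symm)
  -- positivity of cos (θ/2) and the slit plane condition
  have hpi := Real.pi_pos
  have hcos : 0 < Real.cos (θ / 2) :=
    Real.cos_pos_of_mem_Ioo ⟨by linarith, by linarith⟩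
  have hre : 0 < (1 + w₀).re := by
    have : (1 + w₀).re = 1 + Real.cos θ := by
      simp [hw₀, Complex.add_re, Complex.exp_ofReal_mul_I_re]
    rw [this]
    have h := Real.cos_sq (θ / 2)
    rw [show 2 * (θ / 2) = θ by ring] at h
    nlinarith
  have hslit : (1 + w₀) ∈ Complex.slitPlane := Complex.mem_slitPlane_iff.2 (Or.inl hre)
  -- limit of the closed form along the radial path
  have hcontAt : ContinuousAt (fun r : ℝ =>
      ((r : ℂ) * w₀) - (1 + (r : ℂ) * w₀) * Complex.log (1 + (r : ℂ) * w₀)) 1 := by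
    have hbase : ContinuousAt (fun r : ℝ => 1 + (r : ℂ) * w₀) 1 := by fun_prop
    have hlog : ContinuousAt Complex.log ((fun r : ℝ => 1 + (r : ℂ) * w₀) 1) :=
      continuousAt_clog (by simpa using hslit)
    exact (Complex.continuous_ofReal.continuousAt.mul continuousAt_const).sub
      (hbase.mul (ContinuousAt.comp (g := Complex.log) (f := fun r : ℝ => 1 + (r : ℂ) * w₀) hlog hbase))
  have T2 : Tendsto (fun r : ℝ =>
      ((r : ℂ) * w₀) - (1 + (r : ℂ) * w₀) * Complex.log (1 + (r : ℂ) * w₀)) (𝓝[<] (1 : ℝ))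
      (𝓝 (w₀ - (1 + w₀) * Complex.log (1 + w₀))) := by
    have := hcontAt.tendsto.mono_left (nhdsWithin_le_nhds (s := Set.Iio (1 : ℝ)))
    simpa using this
  -- dominated convergence for the series along the radial path
  have hIoo : Set.Ioo (0 : ℝ) 1 ∈ 𝓝[<] (1 : ℝ) :=
    Ioo_mem_nhdsLT_of_mem (by norm_num)
  have T1 : Tendsto (fun r : ℝ => ∑' k : ℕ,
      (-1 : ℂ) ^ (k + 1) / (((k : ℂ) + 1) * ((k : ℂ) + 2)) * ((r : ℂ) * w₀) ^ (k + 2))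
      (𝓝[<] (1 : ℝ))
      (𝓝 (∑' k : ℕ, (-1 : ℂ) ^ (k + 1) / (((k : ℂ) + 1) * ((k : ℂ) + 2)) * w₀ ^ (k + 2))) := by
    refine tendsto_tsum_of_dominated_convergence aux_summable_s19 (fun k => ?_) ?_
    · have hc : Continuous (fun r : ℝ =>
        (-1 : ℂ) ^ (k + 1) / (((k : ℂ) + 1) * ((k : ℂ) + 2)) * ((r : ℂ) * w₀) ^ (k + 2)) := by
        fun_prop
      have := (hc.tendsto 1).mono_left (nhdsWithin_le_nhds (s := Set.Iio (1 : ℝ)))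
      simpa using this
    · filter_upwards [hIoo] with r hr k
      have hrn : ‖(r : ℂ) * w₀‖ = r := by
        rw [norm_mul, hw₀n, mul_one, Complex.norm_real, Real.norm_eq_abs,
          abs_of_pos hr.1]
      rw [norm_mul, norm_pow, hrn, aux_norm]
      have : r ^ (k + 2) ≤ 1 := pow_le_one₀ hr.1.le hr.2.le
      have hb : (0:ℝ) < 1 / (((k : ℝ) + 1) * ((k : ℝ) + 2)) := by positivity
      nlinarith [pow_nonneg hr.1.le (k+2)]
  -- the two limits agree
  have heq : (fun r : ℝ =>
      ((r : ℂ) * w₀) - (1 + (r : ℂ) * w₀) * Complex.log (1 + (r : ℂ) * w₀)) =ᶠ[𝓝[<] (1 : ℝ)]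
      (fun r : ℝ => ∑' k : ℕ,
        (-1 : ℂ) ^ (k + 1) / (((k : ℂ) + 1) * ((k : ℂ) + 2)) * ((r : ℂ) * w₀) ^ (k + 2)) := by
    filter_upwards [hIoo] with r hr
    have hlt : ‖(r : ℂ) * w₀‖ < 1 := by
      rw [norm_mul, hw₀n, mul_one, Complex.norm_real, Real.norm_eq_abs, abs_of_pos hr.1]
      exact hr.2
    exact ((aux_inner _ hlt).tsum_eq).symm
  have hkey := tendsto_nhds_unique T1 (T2.congr' heq)
  exact hkey ▸ hsumm.hasSum

/-- For `-π < θ < π`, the series `∑_{k≥1} ((-1)^k/(k(k+1))) sin((2k+1)θ/2)`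
converges absolutely and its sum equals `sin(θ/2) - θ cos(θ/2)`. -/
theorem stmt_19 (θ : ℝ) (h₁ : -Real.pi < θ) (h₂ : θ < Real.pi) :
    Summable (fun k : ℕ =>
      |((-1 : ℝ) ^ (k + 1) / (((k : ℝ) + 1) * ((k : ℝ) + 2))) *
        Real.sin ((2 * ((k : ℝ) + 1) + 1) * θ / 2)|) ∧
    ∑' k : ℕ, ((-1 : ℝ) ^ (k + 1) / (((k : ℝ) + 1) * ((k : ℝ) + 2))) *
        Real.sin ((2 * ((k : ℝ) + 1) + 1) * θ / 2) =
      Real.sin (θ / 2) - θ * Real.cos (θ / 2) := by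
  have hpi := Real.pi_pos
  have hcos : 0 < Real.cos (θ / 2) :=
    Real.cos_pos_of_mem_Ioo ⟨by linarith, by linarith⟩
  constructor
  · refine aux_summable_s19.of_nonneg_of_le (fun k => abs_nonneg _) fun k => ?_
    rw [abs_mul, abs_div, _root_.abs_pow, abs_neg, abs_one, one_pow]
    have h1 : |((k : ℝ) + 1) * ((k : ℝ) + 2)| = ((k : ℝ) + 1) * ((k : ℝ) + 2) :=
      abs_of_pos (by positivity)
    rw [h1]
    have h2 : (0:ℝ) < 1 / (((k : ℝ) + 1) * ((k : ℝ) + 2)) := by positivity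
    calc 1 / (((k : ℝ) + 1) * ((k : ℝ) + 2)) * |Real.sin ((2 * ((k : ℝ) + 1) + 1) * θ / 2)|
        ≤ 1 / (((k : ℝ) + 1) * ((k : ℝ) + 2)) * 1 := by
          exact mul_le_mul_of_nonneg_left (Real.abs_sin_le_one _) h2.le
      _ = 1 / (((k : ℝ) + 1) * ((k : ℝ) + 2)) := mul_one _
  -- the value
  set w₀ : ℂ := Complex.exp (θ * I) with hw₀
  set L : ℂ := Complex.log (1 + w₀) with hL
  have hM := (aux_boundary θ h₁ h₂).mul_left (Complex.exp (Complex.ofReal (-(θ / 2)) * I))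
  have hIm := Complex.hasSum_im hM
  -- identify the terms
  have hterm : ∀ k : ℕ, (Complex.exp (Complex.ofReal (-(θ / 2)) * I) *
      ((-1) ^ (k + 1) / (((k : ℂ) + 1) * ((k : ℂ) + 2)) * w₀ ^ (k + 2))).im
      = ((-1 : ℝ) ^ (k + 1) / (((k : ℝ) + 1) * ((k : ℝ) + 2))) *
        Real.sin ((2 * ((k : ℝ) + 1) + 1) * θ / 2) := by
    intro k
    have hx : Complex.exp (Complex.ofReal (-(θ / 2)) * I) *
        ((-1) ^ (k + 1) / (((k : ℂ) + 1) * ((k : ℂ) + 2)) * w₀ ^ (k + 2))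
        = Complex.ofReal ((-1 : ℝ) ^ (k + 1) / (((k : ℝ) + 1) * ((k : ℝ) + 2))) *
          Complex.exp (Complex.ofReal ((2 * ((k : ℝ) + 1) + 1) * θ / 2) * I) := by
      rw [hw₀, ← Complex.exp_nat_mul, mul_left_comm, ← Complex.exp_add]
      congr 1
      · push_cast; ring
      · push_cast; ring
    rw [hx, Complex.mul_im, Complex.ofReal_re, Complex.ofReal_im,
      Complex.exp_ofReal_mul_I_im]
    ring
  -- identify the value
  have hval : (Complex.exp (Complex.ofReal (-(θ / 2)) * I) * (w₀ - (1 + w₀) * L)).im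
      = Real.sin (θ / 2) - θ * Real.cos (θ / 2) := by
    have hEw : Complex.exp (Complex.ofReal (-(θ / 2)) * I) * w₀
        = Complex.exp (Complex.ofReal (θ / 2) * I) := by
      rw [hw₀, ← Complex.exp_add]; congr 1; push_cast; ring
    have hE1 : Complex.exp (Complex.ofReal (-(θ / 2)) * I) * (1 + w₀)
        = Complex.ofReal (2 * Real.cos (θ / 2)) := by
      rw [mul_add, mul_one, hEw,
        show Complex.ofReal (-(θ / 2)) = -Complex.ofReal (θ / 2) by push_cast; ring,
        add_comm, neg_mul, ← neg_mul, ← Complex.two_cos, ← Complex.ofReal_cos]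
      push_cast
      ring
    have hLim : L.im = θ / 2 := by
      have hid : 1 + w₀ = Complex.ofReal (2 * Real.cos (θ / 2)) *
          (Complex.ofReal (Real.cos (θ / 2)) + Complex.ofReal (Real.sin (θ / 2)) * I) := by
        apply Complex.ext
        · have h := Real.cos_sq (θ / 2)
          rw [show 2 * (θ / 2) = θ by ring] at h
          simp only [hw₀, Complex.add_re, Complex.one_re, Complex.mul_re, Complex.mul_im,
            Complex.add_im, Complex.one_im, Complex.ofReal_re, Complex.ofReal_im,
            Complex.I_re, Complex.I_im, Complex.exp_ofReal_mul_I_re, Complex.exp_ofReal_mul_I_im]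
          nlinarith
        · have h := Real.sin_two_mul (θ / 2)
          rw [show 2 * (θ / 2) = θ by ring] at h
          simp only [hw₀, Complex.add_re, Complex.one_re, Complex.mul_re, Complex.mul_im,
            Complex.add_im, Complex.one_im, Complex.ofReal_re, Complex.ofReal_im,
            Complex.I_re, Complex.I_im, Complex.exp_ofReal_mul_I_re, Complex.exp_ofReal_mul_I_im]
          linarith
      rw [Complex.ofReal_cos, Complex.ofReal_sin] at hid
      rw [hL, Complex.log_im, hid,
        Complex.arg_mul_cos_add_sin_mul_I (by linarith) ⟨by linarith, by linarith⟩]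
    have hexpand : Complex.exp (Complex.ofReal (-(θ / 2)) * I) * (w₀ - (1 + w₀) * L)
        = Complex.exp (Complex.ofReal (θ / 2) * I) - Complex.ofReal (2 * Real.cos (θ / 2)) * L := by
      rw [mul_sub, hEw, ← mul_assoc, hE1]
    rw [hexpand, Complex.sub_im, Complex.mul_im, Complex.ofReal_re, Complex.ofReal_im,
      Complex.exp_ofReal_mul_I_im, hLim]
    ring
  have hh : HasSum (fun k : ℕ =>
      ((-1 : ℝ) ^ (k + 1) / (((k : ℝ) + 1) * ((k : ℝ) + 2))) *
        Real.sin ((2 * ((k : ℝ) + 1) + 1) * θ / 2))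
      (Real.sin (θ / 2) - θ * Real.cos (θ / 2)) :=
    (hval ▸ hIm).congr_fun fun k => (hterm k).symm
  exact hh.tsum_eq
end
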